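/- Let (P, A, λ) be a marked poset such that λ(a) ∈ ℤ for every a ∈ A. Then the marked order polytope O_{P,A}(λ) is a lattice polytope: every vertex (extreme point) x of O_{P,A}(λ) satisfies x(p) ∈ ℤ for all p ∈ P∖A. -/

import Mathlib

open Classical in
/-- The extension of `x : P∖A → ℝ` to all of `P`, taking the value `lam a` on marked
elements `a ∈ A`. -/
noncomputable def mopExtend {P : Type*} (A : Set P) (lam : A → ℝ)
    (x : {p : P // p ∉ A} → ℝ) : P → ℝ :=
  fun p => if h : p ∈ A then lam ⟨p, h⟩ else x ⟨p, h⟩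

/-- The marked order polytope of the marked poset `(P, A, lam)`, realized in `ℝ^{P∖A}`. -/
def markedOrderPolytope {P : Type*} [PartialOrder P] (A : Set P) (lam : A → ℝ) :
    Set ({p : P // p ∉ A} → ℝ) :=
  {x | ∀ p q : P, p ≤ q → mopExtend A lam x p ≤ mopExtend A lam x q}

/-- If all markings are integral, then the marked order polytope is a lattice polytope:
all coordinates of all of its vertices are integers. -/
theorem statement2 {P : Type*} [Fintype P] [PartialOrder P]
    (A : Set P) (lam : A → ℝ)
    (hAmin : ∀ p : P, IsMin p → p ∈ A) (hAmax : ∀ p : P, IsMax p → p ∈ A)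
    (hlam : ∀ a b : A, (a : P) ≤ (b : P) → lam a ≤ lam b)
    (hint : ∀ a : A, ∃ k : ℤ, lam a = k)
    (x : {p : P // p ∉ A} → ℝ)
    (hx : x ∈ (markedOrderPolytope A lam).extremePoints ℝ) :
    ∀ p : {p : P // p ∉ A}, ∃ k : ℤ, x p = k := by
  classical
  by_contra hcon
  push_neg at hcon
  obtain ⟨p₀, hp₀⟩ := hcon
  set t := x p₀ with ht
  set E := mopExtend A lam x with hE
  have hxmem : x ∈ markedOrderPolytope A lam := hx.1
  have hEx : ∀ (p : P) (h : p ∉ A), E p = x ⟨p, h⟩ := by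
    intro p h; simp [hE, mopExtend, h]
  have hAne : ∀ (q : P) (hq : q ∈ A), E q ≠ t := by
    intro q hq h
    obtain ⟨k, hk⟩ := hint ⟨q, hq⟩
    have : E q = (k : ℝ) := by simp [hE, mopExtend, hq, hk]
    exact hp₀ k (by rw [← h, this])
  -- the perturbed points
  set y : ℝ → ({p : P // p ∉ A} → ℝ) :=
    fun ε q => if x q = t then x q + ε else x q with hy
  have hext : ∀ (ε : ℝ) (p : P),
      mopExtend A lam (y ε) p = if (p ∉ A ∧ E p = t) then E p + ε else E p := by
    intro ε p
    by_cases h : p ∈ A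
    · simp [mopExtend, hE, h]
    · have hx' : E p = x ⟨p, h⟩ := hEx p h
      by_cases h2 : x ⟨p, h⟩ = t
      · simp [mopExtend, hy, h, h2, hx']
      · simp [mopExtend, hy, h, h2, hx']
  -- choose a small ε
  set F : Finset (P × P) :=
    Finset.univ.filter (fun pq => pq.1 ≤ pq.2 ∧ E pq.1 < E pq.2) with hF
  set G : Finset ℝ := insert 1 (F.image fun pq => E pq.2 - E pq.1) with hG
  have hGne : G.Nonempty := ⟨1, by simp [hG]⟩
  set m : ℝ := G.min' hGne with hm
  have hmpos : 0 < m := by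
    have hmem := G.min'_mem hGne
    rw [← hm] at hmem
    rw [hG] at hmem
    simp only [Finset.mem_insert, Finset.mem_image] at hmem
    rcases hmem with h1 | ⟨pq, hpq, h2⟩
    · rw [h1]; norm_num
    · rw [hF] at hpq
      simp only [Finset.mem_filter] at hpq
      rw [← h2]; linarith [hpq.2.2]
  set ε : ℝ := m / 2 with hε
  have hεpos : 0 < ε := by positivity
  have hεle : ∀ p q : P, p ≤ q → E p < E q → ε ≤ E q - E p := by
    intro p q hpq hlt
    have hmemG : E q - E p ∈ G := by
      rw [hG]
      refine Finset.mem_insert_of_mem (Finset.mem_image.2 ⟨(p, q), ?_, rfl⟩)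
      rw [hF]; simp [hpq, hlt]
    have := G.min'_le _ hmemG
    rw [← hm] at this
    rw [hε]; linarith
  -- membership of the perturbed points
  have hmem : ∀ ε' : ℝ, |ε'| ≤ ε → y ε' ∈ markedOrderPolytope A lam := by
    intro ε' hε' p q hpq
    rw [hext, hext]
    have hx0 : E p ≤ E q := hxmem p q hpq
    have habs1 : ε' ≤ ε := le_trans (le_abs_self _) hε'
    have habs2 : -ε ≤ ε' := neg_le_of_neg_le (le_trans (neg_le_abs _) hε')
    by_cases hp : p ∉ A ∧ E p = t <;> by_cases hq' : q ∉ A ∧ E q = t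
    · rw [if_pos hp, if_pos hq']; linarith
    · rw [if_pos hp, if_neg hq']
      have hqne : E q ≠ t := by
        by_cases hqA : q ∈ A
        · exact hAne q hqA
        · intro h; exact hq' ⟨hqA, h⟩
      have : E p < E q := lt_of_le_of_ne hx0 (fun h => hqne (h ▸ hp.2))
      have := hεle p q hpq this
      linarith
    · rw [if_neg hp, if_pos hq']
      have hpne : E p ≠ t := by
        by_cases hpA : p ∈ A
        · exact hAne p hpA
        · intro h; exact hp ⟨hpA, h⟩
      have : E p < E q := lt_of_le_of_ne hx0 (fun h => hpne (h.symm ▸ hq'.2))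
      have := hεle p q hpq this
      linarith
    · rw [if_neg hp, if_neg hq']; exact hx0
  have hmem1 : y ε ∈ markedOrderPolytope A lam := hmem ε (by rw [abs_of_pos hεpos])
  have hmem2 : y (-ε) ∈ markedOrderPolytope A lam := by
    apply hmem; rw [abs_neg, abs_of_pos hεpos]
  have hseg : x ∈ openSegment ℝ (y (-ε)) (y ε) := by
    refine ⟨1/2, 1/2, by norm_num, by norm_num, by norm_num, ?_⟩
    funext q
    simp only [hy, Pi.add_apply, Pi.smul_apply, smul_eq_mul]
    split_ifs <;> ring
  obtain ⟨_, hright⟩ := (mem_extremePoints.1 hx).2 _ hmem2 _ hmem1 hseg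
  have : y ε p₀ = x p₀ := by rw [hright]
  rw [hy] at this
  simp only [← ht, if_pos rfl, if_true] at this
  linarith
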